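/- Let Δ be a finite simple graph on vertex set V of size n. The number of proper set k-colorings of Δ satisfies χ^set_Δ(k) = ∑_{π ∈ Π(Δ)} μ(0̂,π) ∏_{B∈π} Fr(k,|B|), where Fr(k,r) = ∑_{j=0}^{k} C(k,j)^r, Π(Δ) is the lattice of connected partitions of Δ, and μ is its Möbius function. -/

import Mathlib

open scoped Classical

/-- A partition of the vertex set is connected when every block induces a connected
subgraph. -/
def ConnectedPartition {V : Type*} [Fintype V] [DecidableEq V] (G : SimpleGraph V)
    (π : Finpartition (Finset.univ : Finset V)) : Prop :=
  ∀ B ∈ π.parts, (G.induce (B : Set V)).Connected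

section AuxLemmas

open Finset SimpleGraph

variable {V : Type*}

lemma aux_reachable_induce {G : SimpleGraph V} {S : Set V} {u v : V}
    (p : G.Walk u v) (hp : ∀ w ∈ p.support, w ∈ S) (hu : u ∈ S) (hv : v ∈ S) :
    (G.induce S).Reachable ⟨u, hu⟩ ⟨v, hv⟩ := by
  induction p with
  | nil => exact SimpleGraph.Reachable.refl _
  | @cons a b c h q ih =>
    have hb : b ∈ S := hp b (by simp)
    refine SimpleGraph.Reachable.trans ?_ (ih (fun w hw => hp w (by simp [hw])) hb hv)
    exact SimpleGraph.Adj.reachable (by simpa using h)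

lemma aux_reachable_of_induce {G H : SimpleGraph V} {S : Set V}
    (h : ∀ a b : V, a ∈ S → b ∈ S → G.Adj a b → H.Adj a b)
    {u v : S} (hr : (G.induce S).Reachable u v) : H.Reachable u v :=
  hr.map ⟨Subtype.val, fun {a b} hab => h a b a.2 b.2 (by simpa using hab)⟩

/-- the monochromatic subgraph -/
def monoSub (G : SimpleGraph V) {α : Type*} (g : V → α) : SimpleGraph V where
  Adj i j := G.Adj i j ∧ g i = g j
  symm := ⟨fun i j ⟨h1, h2⟩ => ⟨h1.symm, h2.symm⟩⟩
  loopless := ⟨fun i h => G.loopless.irrefl i h.1⟩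

lemma g_eq_of_monoSub_reachable {G : SimpleGraph V} {α : Type*} {g : V → α} {u v : V}
    (h : (monoSub G g).Reachable u v) : g u = g v := by
  obtain ⟨p⟩ := h
  induction p with
  | nil => rfl
  | @cons a b c h q ih => exact h.2.trans ih

variable [Fintype V] [DecidableEq V]

/-- the partition into monochromatic components -/
noncomputable def monoPart (G : SimpleGraph V) {α : Type*} (g : V → α) :
    Finpartition (univ : Finset V) :=
  Finpartition.ofSetoid (monoSub G g).reachableSetoid

lemma mem_part_monoPart {G : SimpleGraph V} {α : Type*} {g : V → α} {a b : V} :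
    b ∈ (monoPart G g).part a ↔ (monoSub G g).Reachable a b :=
  Finpartition.mem_part_ofSetoid_iff_rel

variable {G : SimpleGraph V} {α : Type*} {g : V → α}

lemma connected_monoPart : ConnectedPartition G (monoPart G g) := by
  intro B hB
  obtain ⟨a, -, ha⟩ := (monoPart G g).part_surjOn hB
  have haB : a ∈ B := ha ▸ (monoPart G g).mem_part (mem_univ a)
  rw [SimpleGraph.connected_iff]
  constructor
  · rintro ⟨u, hu⟩ ⟨v, hv⟩
    have hu' : (monoSub G g).Reachable a u := mem_part_monoPart.mp (ha ▸ hu)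
    have hv' : (monoSub G g).Reachable a v := mem_part_monoPart.mp (ha ▸ hv)
    obtain ⟨p⟩ := hu'.symm.trans hv'
    have hsupp : ∀ w ∈ p.support, w ∈ (B : Set V) := by
      intro w hw
      have : (monoSub G g).Reachable u w := ⟨p.takeUntil w hw⟩
      simpa using ha ▸ mem_part_monoPart.mpr (hu'.trans this)
    exact (aux_reachable_induce p hsupp (by simpa using hu) (by simpa using hv)).mono
      (fun x y hxy => by simp only [comap_adj] at hxy ⊢; exact hxy.1)
  · exact ⟨⟨a, by simpa using haB⟩⟩

lemma const_iff_le_monoPart {σ : Finpartition (univ : Finset V)}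
    (hσ : ConnectedPartition G σ) :
    (∀ B ∈ σ.parts, ∀ a ∈ B, ∀ b ∈ B, g a = g b) ↔ σ ≤ monoPart G g := by
  constructor
  · intro hc C hC
    obtain ⟨a, haC⟩ := σ.nonempty_of_mem_parts hC
    refine ⟨(monoPart G g).part a, (monoPart G g).part_mem.mpr (mem_univ a), fun v hv => ?_⟩
    have hr : (G.induce (C : Set V)).Reachable ⟨a, by simpa using haC⟩ ⟨v, by simpa using hv⟩ :=
      (hσ C hC).preconnected _ _
    exact mem_part_monoPart.mpr (aux_reachable_of_induce (H := monoSub G g)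
      (fun x y hx hy hxy => ⟨hxy, hc C hC x (by simpa using hx) y (by simpa using hy)⟩) hr)
  · intro hle C hC a haC b hbC
    obtain ⟨B, hB, hCB⟩ := hle hC
    obtain ⟨c, -, hc⟩ := (monoPart G g).part_surjOn hB
    have h1 : (monoSub G g).Reachable c a := mem_part_monoPart.mp (hc ▸ hCB haC)
    have h2 : (monoSub G g).Reachable c b := mem_part_monoPart.mp (hc ▸ hCB hbC)
    exact g_eq_of_monoSub_reachable (h1.symm.trans h2)

lemma monoPart_eq_bot_iff :
    monoPart G g = ⊥ ↔ ∀ i j, G.Adj i j → g i ≠ g j := by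
  constructor
  · intro h i j hij hgij
    have : j ∈ (monoPart G g).part i :=
      mem_part_monoPart.mpr (SimpleGraph.Adj.reachable ⟨hij, hgij⟩)
    have hpi : (monoPart G g).part i = {i} := by
      rw [h]
      exact Finpartition.part_eq_of_mem _ (by simp [Finpartition.parts_bot, mem_map]
        ) (mem_singleton_self i)
    rw [hpi, mem_singleton] at this
    exact G.loopless.irrefl i (this ▸ hij)
  · intro h
    have hbot : monoSub G g = ⊥ := by
      ext i j
      simp only [SimpleGraph.bot_adj, iff_false]
      rintro ⟨h1, h2⟩
      exact h i j h1 h2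
    refine le_antisymm (fun B hB => ?_) bot_le
    obtain ⟨a, -, ha⟩ := (monoPart G g).part_surjOn hB
    have : B = {a} := by
      ext b
      rw [← ha, mem_part_monoPart, hbot, SimpleGraph.reachable_bot, mem_singleton, eq_comm]
    refine ⟨{a}, ?_, this.le⟩
    rw [Finpartition.parts_bot, mem_map]
    exact ⟨a, mem_univ a, rfl⟩

lemma lhs_count (G : SimpleGraph V) (k : ℕ) :
    (Nat.card {c : V → Finset (Fin k) //
        ∀ i j : V, G.Adj i j → (c i).card ≠ (c j).card} : ℤ) =
    ∑ g : V → Fin (k+1), if ∀ i j, G.Adj i j → g i ≠ g j then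
      ∏ v, ((k.choose (g v) : ℤ)) else 0 := by
  classical
  set Φ : (V → Finset (Fin k)) → (V → Fin (k+1)) := fun c v =>
    ⟨(c v).card, Nat.lt_succ_of_le (by simpa using Finset.card_le_univ (c v))⟩ with hΦ
  have hmap : ∀ c ∈ univ.filter (fun c : V → Finset (Fin k) =>
      ∀ i j : V, G.Adj i j → (c i).card ≠ (c j).card),
      Φ c ∈ univ.filter (fun g : V → Fin (k+1) => ∀ i j, G.Adj i j → g i ≠ g j) := by
    intro c hc
    simp only [mem_filter, mem_univ, true_and] at hc ⊢
    intro i j hij h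
    exact hc i j hij (by simpa [hΦ, Fin.ext_iff] using h)
  rw [Nat.card_eq_fintype_card, Fintype.card_subtype,
    Finset.card_eq_sum_card_fiberwise hmap]
  rw [Finset.sum_filter]
  push_cast
  refine Finset.sum_congr rfl fun g _ => ?_
  by_cases hg : ∀ i j, G.Adj i j → g i ≠ g j
  · rw [if_pos hg, if_pos hg]
    have hfib : (univ.filter (fun c : V → Finset (Fin k) =>
        ∀ i j : V, G.Adj i j → (c i).card ≠ (c j).card)).filter (fun c => Φ c = g)
        = Fintype.piFinset (fun v => (univ : Finset (Fin k)).powersetCard (g v).val) := by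
      ext c
      simp only [mem_filter, mem_univ, true_and, Fintype.mem_piFinset, mem_powersetCard,
        subset_univ, true_and, hΦ, funext_iff, Fin.ext_iff]
      constructor
      · rintro ⟨-, h⟩ v; exact h v
      · intro h
        exact ⟨fun i j hij hcard => hg i j hij (Fin.ext (by rw [← h i, ← h j, hcard])), h⟩
    rw [hfib, Fintype.card_piFinset]
    push_cast [Finset.card_powersetCard, Finset.card_univ, Fintype.card_fin]
    rfl
  · rw [if_neg hg]
    suffices h : (univ.filter (fun c : V → Finset (Fin k) =>
        ∀ i j : V, G.Adj i j → (c i).card ≠ (c j).card)).filter (fun c => Φ c = g) = ∅ by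
      simp [h, hg]
    rw [Finset.filter_eq_empty_iff]
    rintro c hc rfl
    exact hg (by simpa using hmap c hc)

lemma prod_over_parts (π : Finpartition (univ : Finset V)) (f : V → ℤ) :
    ∏ v : V, f v = ∏ B ∈ π.parts, ∏ v ∈ B, f v := by
  conv_lhs => rw [← π.biUnion_parts]
  rw [Finset.prod_biUnion π.supIndep.pairwiseDisjoint]
  rfl

lemma prod_parts_eq_sum_const (π : Finpartition (univ : Finset V)) (k : ℕ) :
    (∏ B ∈ π.parts, ∑ j ∈ Finset.range (k + 1), ((k.choose j : ℤ)) ^ B.card)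
      = ∑ g : V → Fin (k+1), if (∀ B ∈ π.parts, ∀ a ∈ B, ∀ b ∈ B, g a = g b)
          then ∏ v, ((k.choose (g v) : ℤ)) else 0 := by
  classical
  have hrange : ∀ B : Finset V, ∑ j ∈ Finset.range (k + 1), ((k.choose j : ℤ)) ^ B.card
      = ∑ j : Fin (k+1), ((k.choose j.val : ℤ)) ^ B.card := by
    intro B
    rw [Fin.sum_univ_eq_sum_range (fun j => ((k.choose j : ℤ)) ^ B.card) (k+1)]
  simp_rw [hrange]
  rw [Finset.prod_sum, ← Finset.sum_filter]
  refine Finset.sum_nbij'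
    (i := fun p (v : V) => p (π.part v) (π.part_mem.mpr (mem_univ v)))
    (j := fun g B hB => g (π.nonempty_of_mem_parts hB).choose) ?_ ?_ ?_ ?_ ?_
  · -- maps pi into filter
    intro p hp
    simp only [mem_filter, mem_univ, true_and]
    intro B hB a ha b hb
    have key : ∀ (C D : Finset V) (hC : C ∈ π.parts) (hD : D ∈ π.parts), C = D →
        p C hC = p D hD := by rintro C D hC hD rfl; rfl
    exact key _ _ _ _ ((π.part_eq_of_mem hB ha).trans (π.part_eq_of_mem hB hb).symm)
  · -- maps filter into pi
    intro g hg
    simp [Finset.mem_pi]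
  · -- left inverse
    intro p hp
    have key : ∀ (C D : Finset V) (hC : C ∈ π.parts) (hD : D ∈ π.parts), C = D →
        p C hC = p D hD := by rintro C D hC hD rfl; rfl
    funext B hB
    exact key _ _ _ _ (π.part_eq_of_mem hB (π.nonempty_of_mem_parts hB).choose_spec)
  · -- right inverse
    intro g hg
    simp only [mem_filter, mem_univ, true_and] at hg
    funext v
    have h1 : π.part v ∈ π.parts := π.part_mem.mpr (mem_univ v)
    exact hg _ h1 _ (π.nonempty_of_mem_parts h1).choose_spec _ (π.mem_part (mem_univ v))
  · -- values agree
    intro p hp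
    have key : ∀ (C D : Finset V) (hC : C ∈ π.parts) (hD : D ∈ π.parts), C = D →
        p C hC = p D hD := by rintro C D hC hD rfl; rfl
    rw [prod_over_parts π (fun v =>
      ((k.choose ((p (π.part v) (π.part_mem.mpr (mem_univ v))) : Fin (k+1)).val : ℤ)))]
    rw [← Finset.prod_attach π.parts (fun B => ∏ v ∈ B,
      ((k.choose ((p (π.part v) (π.part_mem.mpr (mem_univ v))) : Fin (k+1)).val : ℤ)))]
    refine Finset.prod_congr rfl fun B _ => ?_
    have hB := B.2
    calc ((k.choose (p B.1 B.2).val : ℤ)) ^ B.1.card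
        = ∏ _v ∈ B.1, ((k.choose (p B.1 B.2).val : ℤ)) := by rw [Finset.prod_const]
      _ = _ := by
          refine Finset.prod_congr rfl fun v hv => ?_
          congr 1
          exact (key _ _ _ _ (π.part_eq_of_mem hB hv).symm) ▸ rfl

end AuxLemmas

/-- The number of proper set `k`-colorings of a finite simple graph equals the Möbius
inversion sum over connected partitions, with extended Franel numbers
`Fr(k,r) = ∑_j C(k,j)^r` on the blocks. -/
theorem stmt12 {V : Type*} [Fintype V] [DecidableEq V] (G : SimpleGraph V) (k : ℕ)
    (μ : Finpartition (Finset.univ : Finset V) → ℤ)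
    (hμ : ∀ π : Finpartition (Finset.univ : Finset V), ConnectedPartition G π →
      (∑ σ : Finpartition (Finset.univ : Finset V),
          if ConnectedPartition G σ ∧ σ ≤ π then μ σ else 0) =
        if π = ⊥ then 1 else 0) :
    (Nat.card {c : V → Finset (Fin k) //
        ∀ i j : V, G.Adj i j → (c i).card ≠ (c j).card} : ℤ) =
      ∑ π : Finpartition (Finset.univ : Finset V),
        if ConnectedPartition G π then
          μ π * ∏ B ∈ π.parts, ∑ j ∈ Finset.range (k + 1), ((k.choose j : ℤ)) ^ B.card
        else 0 := by
  classical
  rw [lhs_count G k]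
  have step : ∀ π : Finpartition (Finset.univ : Finset V),
      (if ConnectedPartition G π then
          μ π * ∏ B ∈ π.parts, ∑ j ∈ Finset.range (k + 1), ((k.choose j : ℤ)) ^ B.card
        else 0)
      = ∑ g : V → Fin (k+1),
          if ConnectedPartition G π ∧ (∀ B ∈ π.parts, ∀ a ∈ B, ∀ b ∈ B, g a = g b) then
            μ π * ∏ v, ((k.choose (g v) : ℤ)) else 0 := by
    intro π
    by_cases h : ConnectedPartition G π
    · rw [if_pos h, prod_parts_eq_sum_const, Finset.mul_sum]
      refine Finset.sum_congr rfl fun g _ => ?_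
      by_cases hg : ∀ B ∈ π.parts, ∀ a ∈ B, ∀ b ∈ B, g a = g b
      · rw [if_pos hg, if_pos ⟨h, hg⟩]
      · rw [if_neg hg, if_neg (fun hh => hg hh.2), mul_zero]
    · rw [if_neg h]
      exact (Finset.sum_eq_zero fun g _ => if_neg (fun hh => h hh.1)).symm
  rw [Finset.sum_congr rfl (fun π _ => step π), Finset.sum_comm]
  refine Finset.sum_congr rfl fun g _ => ?_
  have hcond : ∀ π : Finpartition (Finset.univ : Finset V),
      (ConnectedPartition G π ∧ (∀ B ∈ π.parts, ∀ a ∈ B, ∀ b ∈ B, g a = g b))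
      ↔ (ConnectedPartition G π ∧ π ≤ monoPart G g) := fun π =>
    and_congr_right fun h => const_iff_le_monoPart h
  have main : (∑ π : Finpartition (Finset.univ : Finset V),
      if ConnectedPartition G π ∧ (∀ B ∈ π.parts, ∀ a ∈ B, ∀ b ∈ B, g a = g b) then
        μ π * ∏ v, ((k.choose (g v) : ℤ)) else 0)
      = (∑ π : Finpartition (Finset.univ : Finset V),
          if ConnectedPartition G π ∧ π ≤ monoPart G g then μ π else 0)
        * ∏ v, ((k.choose (g v) : ℤ)) := by
    rw [Finset.sum_mul]
    refine Finset.sum_congr rfl fun π _ => ?_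
    rw [if_congr (hcond π) rfl rfl]
    split_ifs <;> simp
  rw [main, hμ (monoPart G g) connected_monoPart]
  by_cases hp : ∀ i j, G.Adj i j → g i ≠ g j
  · rw [if_pos (monoPart_eq_bot_iff.mpr hp), if_pos hp, one_mul]
  · rw [if_neg (fun hb => hp (monoPart_eq_bot_iff.mp hb)), if_neg hp, zero_mul]
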